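/- Let (v_1, ..., v_k) be a p-basis of a Z_{p^r}-submodule M of Z_{p^r}^n. If v_i' = v_i + Σ_{j=i+1}^{k} a_j v_j with a_j ∈ Z_{p^r}, then (v_1, ..., v_{i-1}, v_i', v_{i+1}, ..., v_k) is also a p-basis of M. -/

import Mathlib

theorem reduce_aux' {p r n k : ℕ} [NeZero (p ^ r)] (hp : 0 < p)
    (v : Fin k → (Fin n → ZMod (p ^ r)))
    (hgen : ∀ m : Fin k, ∃ C : Fin k → ZMod (p ^ r),
      (∀ j : Fin k, (j : ℕ) ≤ (m : ℕ) → C j = 0) ∧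
      (p : ZMod (p ^ r)) • v m = ∑ j, C j • v j) :
    ∀ (d : ℕ) (a : Fin k → ℕ), (∀ j : Fin k, (j : ℕ) + d < k → a j < p) →
      ∃ b : Fin k → ℕ, (∀ j, b j < p) ∧ (∀ j : Fin k, (j : ℕ) + d < k → b j = a j) ∧
        ∑ j, (a j : ZMod (p ^ r)) • v j = ∑ j, (b j : ZMod (p ^ r)) • v j := by
  intro d
  induction d with
  | zero =>
    intro a ha
    exact ⟨a, fun j => ha j (by omega), fun j _ => rfl, rfl⟩
  | succ d ih =>
    intro a ha
    by_cases hdk : k ≤ d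
    · obtain ⟨b, hb1, hb2, hb3⟩ := ih a (fun j hj => absurd hj (by omega))
      exact ⟨b, hb1, fun j hj => hb2 j (by omega), hb3⟩
    · push_neg at hdk
      set m : Fin k := ⟨k - d - 1, by omega⟩ with hm
      have hmval : (m : ℕ) = k - d - 1 := rfl
      by_cases ham : a m < p
      · have ha2 : ∀ j : Fin k, (j : ℕ) + d < k → a j < p := by
          intro j hj
          by_cases hjm : j = m
          · rwa [hjm]
          · have : (j : ℕ) ≠ k - d - 1 := fun h => hjm (Fin.ext h)
            exact ha j (by omega)
        obtain ⟨b, hb1, hb2, hb3⟩ := ih a ha2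
        exact ⟨b, hb1, fun j hj => hb2 j (by omega), hb3⟩
      · obtain ⟨C, hC0, hCsum⟩ := hgen m
        set s : ℕ := a m % p with hs
        set q : ℕ := a m / p with hq
        set a' : Fin k → ℕ := fun j => if j = m then s else a j + q * (C j).val with ha'def
        have hCm : C m = 0 := hC0 m le_rfl
        have hval : ∀ c : ZMod (p ^ r), ((c.val : ℕ) : ZMod (p ^ r)) = c := fun c =>
          ZMod.natCast_rightInverse c
        have ha' : ∀ j : Fin k, (j : ℕ) + d < k → a' j < p := by
          intro j hj
          by_cases hjm : j = m
          · rw [hjm]; simp only [a', if_pos rfl]; exact Nat.mod_lt _ hp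
          · have hjk : (j : ℕ) ≠ k - d - 1 := fun h => hjm (Fin.ext h)
            have hCj : C j = 0 := hC0 j (by omega)
            simp only [a', if_neg hjm, hCj, ZMod.val_zero, Nat.mul_zero, Nat.add_zero]
            exact ha j (by omega)
        have key : ∑ j, (a' j : ZMod (p ^ r)) • v j = ∑ j, (a j : ZMod (p ^ r)) • v j := by
          have h1 : ∀ j : Fin k, (a' j : ZMod (p ^ r)) • v j
              = (a j : ZMod (p ^ r)) • v j + (q : ZMod (p ^ r)) • (C j • v j)
                - (if j = m then ((q : ZMod (p ^ r)) * p) • v m else 0) := by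
            intro j
            by_cases hjm : j = m
            · rw [hjm, if_pos rfl]
              have ham2 : (a m : ZMod (p ^ r)) = (p : ZMod (p ^ r)) * q + s := by
                conv_lhs => rw [← Nat.div_add_mod (a m) p]
                push_cast; ring
              have ha'm : a' m = s := if_pos rfl
              rw [ha'm, ham2, hCm]
              module
            · simp only [a', if_neg hjm, Nat.cast_add, Nat.cast_mul, hval (C j)]
              module
          rw [Finset.sum_congr rfl (fun j _ => h1 j), Finset.sum_sub_distrib,
            Finset.sum_add_distrib, ← Finset.smul_sum, ← hCsum,
            Finset.sum_ite_eq' Finset.univ m]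
          simp only [Finset.mem_univ, if_pos, smul_smul]
          module
        obtain ⟨b, hb1, hb2, hb3⟩ := ih a' ha'
        refine ⟨b, hb1, ?_, key ▸ hb3⟩
        intro j hj
        have hjm : j ≠ m := by
          intro h
          have : (j : ℕ) = k - d - 1 := by rw [h, hmval]
          omega
        have hjk : (j : ℕ) ≠ k - d - 1 := fun h => hjm (Fin.ext h)
        have hCj : C j = 0 := hC0 j (by omega)
        rw [hb2 j (by omega)]
        simp [a', if_neg hjm, hCj]

theorem sum_w_eq' {p r n k : ℕ} (v : Fin k → (Fin n → ZMod (p ^ r))) (i : Fin k)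
    (a : Fin k → ZMod (p ^ r)) (c : Fin k → ZMod (p ^ r)) :
    ∑ j, c j • (Function.update v i
        (v i + ∑ j ∈ Finset.univ.filter (fun j : Fin k => i < j), a j • v j)) j
      = ∑ j, (c j + if i < j then c i * a j else 0) • v j := by
  set w := Function.update v i
    (v i + ∑ j ∈ Finset.univ.filter (fun j : Fin k => i < j), a j • v j) with hwdef
  have hw : ∀ j, j ≠ i → w j = v j := fun j h => Function.update_of_ne h _ _
  have hwi : w i = v i + ∑ j ∈ Finset.univ.filter (fun j : Fin k => i < j), a j • v j :=
    Function.update_self _ _ _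
  have h1 : ∑ j, c j • w j
      = ∑ j ∈ Finset.univ \ {i}, c j • w j + c i • w i := by
    rw [Finset.sum_eq_sum_sdiff_singleton_add (Finset.mem_univ i)]
  have h2 : ∑ j, c j • v j
      = ∑ j ∈ Finset.univ \ {i}, c j • v j + c i • v i := by
    rw [Finset.sum_eq_sum_sdiff_singleton_add (Finset.mem_univ i)]
  have h3 : ∑ j ∈ Finset.univ \ {i}, c j • w j = ∑ j ∈ Finset.univ \ {i}, c j • v j := by
    refine Finset.sum_congr rfl fun j hj => ?_
    rw [hw j (by simpa using (Finset.mem_sdiff.mp hj).2)]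
  have h4 : c i • ∑ j ∈ Finset.univ.filter (fun j : Fin k => i < j), a j • v j
      = ∑ j, (if i < j then c i * a j else 0) • v j := by
    rw [Finset.smul_sum, Finset.sum_filter]
    refine Finset.sum_congr rfl fun j _ => ?_
    by_cases hij : i < j
    · simp [hij, smul_smul]
    · simp [hij]
  calc ∑ j, c j • w j
      = ∑ j ∈ Finset.univ \ {i}, c j • v j + c i • v i
        + c i • ∑ j ∈ Finset.univ.filter (fun j : Fin k => i < j), a j • v j := by
        rw [h1, h3, hwi, smul_add]
        abel
    _ = ∑ j, c j • v j + ∑ j, (if i < j then c i * a j else 0) • v j := by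
        rw [← h2, h4]
    _ = ∑ j, (c j + if i < j then c i * a j else 0) • v j := by
        rw [← Finset.sum_add_distrib]
        exact Finset.sum_congr rfl fun j _ => (add_smul _ _ _).symm

theorem sum_v_eq' {p r n k : ℕ} (v : Fin k → (Fin n → ZMod (p ^ r))) (i : Fin k)
    (a : Fin k → ZMod (p ^ r)) (c : Fin k → ZMod (p ^ r)) :
    ∑ j, c j • v j
      = ∑ j, (c j - if i < j then c i * a j else 0) • (Function.update v i
          (v i + ∑ j ∈ Finset.univ.filter (fun j : Fin k => i < j), a j • v j)) j := by
  rw [sum_w_eq' v i a (fun j => c j - if i < j then c i * a j else 0)]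
  refine Finset.sum_congr rfl fun j _ => ?_
  have hii : ¬ i < i := lt_irrefl i
  by_cases hij : i < j
  · simp only [if_pos hij, if_neg hii]
    ring_nf
  · simp [hij]

/-- `(v_1, ..., v_k)` is a `p`-basis of the `Z_{p^r}`-submodule `M` of `Z_{p^r}^n`. -/
def IsPBasis (p r n k : ℕ) (v : Fin k → (Fin n → ZMod (p ^ r)))
    (M : Submodule (ZMod (p ^ r)) (Fin n → ZMod (p ^ r))) : Prop :=
  (∀ i, v i ∈ M) ∧
  (∀ x ∈ M, ∃ a : Fin k → ℕ, (∀ i, a i < p) ∧ x = ∑ i, (a i : ZMod (p ^ r)) • v i) ∧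
  (∀ i : Fin k, ∃ a : Fin k → ℕ, (∀ j, a j < p) ∧ (∀ j : Fin k, (j : ℕ) ≤ (i : ℕ) → a j = 0) ∧
    (p : ZMod (p ^ r)) • v i = ∑ j, (a j : ZMod (p ^ r)) • v j) ∧
  (∀ a : Fin k → ℕ, (∀ i, a i < p) → ∑ i, (a i : ZMod (p ^ r)) • v i = 0 → ∀ i, a i = 0)

/-- Lemma 2.1(1): replacing `v_i` by `v_i' = v_i + Σ_{j>i} a_j v_j` (with `a_j ∈ Z_{p^r}`)
in a `p`-basis of `M` again yields a `p`-basis of `M`. -/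
theorem pbasis_add_later_rows (p r n k : ℕ) (hp : p.Prime) (hr : 0 < r)
    (M : Submodule (ZMod (p ^ r)) (Fin n → ZMod (p ^ r)))
    (v : Fin k → (Fin n → ZMod (p ^ r))) (hv : IsPBasis p r n k v M)
    (i : Fin k) (a : Fin k → ZMod (p ^ r)) :
    IsPBasis p r n k
      (Function.update v i (v i + ∑ j ∈ Finset.univ.filter (fun j : Fin k => i < j), a j • v j))
      M := by
  haveI : NeZero (p ^ r) := ⟨pow_ne_zero r hp.ne_zero⟩
  obtain ⟨hv1, hv2, hv3, hv4⟩ := hv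
  set w := Function.update v i
    (v i + ∑ j ∈ Finset.univ.filter (fun j : Fin k => i < j), a j • v j) with hwdef
  have hval : ∀ c : ZMod (p ^ r), ((c.val : ℕ) : ZMod (p ^ r)) = c := fun c =>
    ZMod.natCast_rightInverse c
  have hw : ∀ j, j ≠ i → w j = v j := fun j h => Function.update_of_ne h _ _
  have hwi : w i = v i + ∑ j ∈ Finset.univ.filter (fun j : Fin k => i < j), a j • v j :=
    Function.update_self _ _ _
  -- weak generator property for w
  choose B hB1 hB2 hB3 using hv3
  have case_i : ∃ C : Fin k → ZMod (p ^ r),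
      (∀ j : Fin k, (j : ℕ) ≤ (i : ℕ) → C j = 0) ∧
      (p : ZMod (p ^ r)) • w i = ∑ j, C j • w j := by
    set C : Fin k → ZMod (p ^ r) := fun l =>
      (B i l : ZMod (p ^ r))
        + ∑ j ∈ Finset.univ.filter (fun j : Fin k => i < j), a j * (B j l : ZMod (p ^ r))
      with hCdef
    have hC0 : ∀ l : Fin k, (l : ℕ) ≤ (i : ℕ) → C l = 0 := by
      intro l hl
      have hB0 : B i l = 0 := hB2 i l hl
      have hz : ∀ j ∈ Finset.univ.filter (fun j : Fin k => i < j),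
          a j * (B j l : ZMod (p ^ r)) = 0 := by
        intro j hj
        have hij : i < j := (Finset.mem_filter.mp hj).2
        have : B j l = 0 := hB2 j l (by
          have : (i : ℕ) < (j : ℕ) := hij
          omega)
        simp [this]
      simp only [hCdef, hB0, Nat.cast_zero, Finset.sum_congr rfl hz, Finset.sum_const_zero]
      simp
    refine ⟨C, hC0, ?_⟩
    have step1 : (p : ZMod (p ^ r)) • w i = ∑ l, C l • v l := by
      rw [hwi, smul_add, hB3 i, Finset.smul_sum]
      have hz : ∀ j ∈ Finset.univ.filter (fun j : Fin k => i < j),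
          (p : ZMod (p ^ r)) • (a j • v j) = ∑ l, (a j * (B j l : ZMod (p ^ r))) • v l := by
        intro j hj
        rw [smul_comm, hB3 j, Finset.smul_sum]
        exact Finset.sum_congr rfl fun l _ => by rw [smul_smul]
      rw [Finset.sum_congr rfl hz, Finset.sum_comm]
      rw [← Finset.sum_add_distrib]
      exact Finset.sum_congr rfl fun l _ => by
        rw [hCdef, add_smul, Finset.sum_smul]
    rw [step1]
    refine Finset.sum_congr rfl fun l _ => ?_
    by_cases hli : l = i
    · have hCl : C l = 0 := hC0 l (by simp [hli])
      rw [hCl, zero_smul, zero_smul]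
    · rw [hw l hli]
  have hgenW : ∀ m : Fin k, ∃ C : Fin k → ZMod (p ^ r),
      (∀ j : Fin k, (j : ℕ) ≤ (m : ℕ) → C j = 0) ∧
      (p : ZMod (p ^ r)) • w m = ∑ j, C j • w j := by
    intro m
    by_cases hmi : m = i
    · rw [hmi]; exact case_i
    · -- m ≠ i
      have hb1 := hB1 m
      have hb2 := hB2 m
      have hb3 := hB3 m
      have key : ∑ j, ((B m j : ℕ) : ZMod (p ^ r)) • v j
          = ∑ j, ((fun l => ((B m l : ZMod (p ^ r)) -
              if i < l then (B m i : ZMod (p ^ r)) * a l else 0)) j) • w j := by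
        rw [hwdef]
        exact sum_v_eq' v i a fun j => ((B m j : ℕ) : ZMod (p ^ r))
      refine ⟨fun l => ((B m l : ZMod (p ^ r)) -
          if i < l then (B m i : ZMod (p ^ r)) * a l else 0), ?_, ?_⟩
      · intro l hl
        show ((B m l : ZMod (p ^ r)) - if i < l then (B m i : ZMod (p ^ r)) * a l else 0) = 0
        rw [hb2 l hl]
        by_cases hil : i < l
        · have : B m i = 0 := hb2 i (by
            have : (i : ℕ) < (l : ℕ) := hil
            omega)
          simp [hil, this]
        · simp [hil]
      · rw [hw m hmi, hb3]
        exact key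
  have reduce := reduce_aux' hp.pos w hgenW
  refine ⟨?_, ?_, ?_, ?_⟩
  · -- membership
    intro j
    by_cases hji : j = i
    · rw [hji, hwi]
      exact M.add_mem (hv1 i) (Submodule.sum_mem M fun j _ => M.smul_mem _ (hv1 j))
    · rw [hw j hji]; exact hv1 j
  · -- spanning
    intro x hx
    obtain ⟨e, he1, he2⟩ := hv2 x hx
    set c' : Fin k → ZMod (p ^ r) := fun j =>
      ((e j : ZMod (p ^ r)) - if i < j then (e i : ZMod (p ^ r)) * a j else 0) with hc'def
    have hx2 : x = ∑ j, c' j • w j := by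
      rw [he2, sum_v_eq' v i a (fun j => (e j : ZMod (p ^ r)))]
    obtain ⟨b, hb1, _, hb3⟩ := reduce k (fun j => (c' j).val) (fun j hj => absurd hj (by omega))
    refine ⟨b, hb1, ?_⟩
    rw [hx2, ← hb3]
    exact Finset.sum_congr rfl fun j _ => by rw [hval]
  · -- p-generator
    intro m
    obtain ⟨C, hC0, hCsum⟩ := hgenW m
    have hCsum' : (p : ZMod (p ^ r)) • w m = ∑ j, (((C j).val : ℕ) : ZMod (p ^ r)) • w j := by
      rw [hCsum]; exact (Finset.sum_congr rfl fun j _ => by rw [hval]).symm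
    have hlt : ∀ j : Fin k, (j : ℕ) + (k - 1 - (m : ℕ)) < k → (C j).val < p := by
      intro j hj
      have := m.isLt
      rw [hC0 j (by omega), ZMod.val_zero]
      exact hp.pos
    obtain ⟨b, hb1, hb2, hb3⟩ := reduce (k - 1 - (m : ℕ)) (fun j => (C j).val) hlt
    refine ⟨b, hb1, ?_, ?_⟩
    · intro j hj
      have := m.isLt
      have h1 := hb2 j (by omega)
      rw [h1, hC0 j hj, ZMod.val_zero]
    · rw [hCsum', hb3]
  · -- independence
    intro b hb hsum
    set C : Fin k → ZMod (p ^ r) := fun j =>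
      ((b j : ZMod (p ^ r)) + if i < j then (b i : ZMod (p ^ r)) * a j else 0) with hCdef
    have hCsum : ∑ j, C j • v j = 0 := by
      rw [← hsum, sum_w_eq' v i a (fun j => (b j : ZMod (p ^ r)))]
    set a₀ : Fin k → ℕ := fun j => if i < j then (C j).val else b j with ha₀def
    have ha₀C : ∀ j, ((a₀ j : ℕ) : ZMod (p ^ r)) = C j := by
      intro j
      by_cases hij : i < j
      · simp only [ha₀def, if_pos hij, hval]
      · simp only [ha₀def, hCdef, if_neg hij, add_zero]
    have hgenv : ∀ m : Fin k, ∃ C : Fin k → ZMod (p ^ r),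
        (∀ j : Fin k, (j : ℕ) ≤ (m : ℕ) → C j = 0) ∧
        (p : ZMod (p ^ r)) • v m = ∑ j, C j • v j := by
      intro m
      refine ⟨fun j => ((B m j : ℕ) : ZMod (p ^ r)), fun j hj => ?_, ?_⟩
      · show ((B m j : ℕ) : ZMod (p ^ r)) = 0
        rw [hB2 m j hj, Nat.cast_zero]
      · exact hB3 m
    have ha₀lt : ∀ j : Fin k, (j : ℕ) + (k - 1 - (i : ℕ)) < k → a₀ j < p := by
      intro j hj
      have := i.isLt
      have hij : ¬ i < j := by
        simp only [Fin.lt_def]; omega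
      simp only [ha₀def, if_neg hij]
      exact hb j
    obtain ⟨b', hb'1, hb'2, hb'3⟩ := reduce_aux' hp.pos v hgenv (k - 1 - (i : ℕ)) a₀ ha₀lt
    have hsum0 : ∑ j, (b' j : ZMod (p ^ r)) • v j = 0 := by
      rw [← hb'3, ← hCsum]
      exact Finset.sum_congr rfl fun j _ => by rw [ha₀C]
    have hb'0 := hv4 b' hb'1 hsum0
    have hbi : b i = 0 := by
      have := i.isLt
      have h1 := hb'2 i (by omega)
      rw [hb'0 i] at h1
      simpa [ha₀def, lt_irrefl] using h1.symm
    have hCb : ∀ j, C j = (b j : ZMod (p ^ r)) := by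
      intro j
      rw [hCdef]
      simp [hbi]
    have hfin : ∑ j, (b j : ZMod (p ^ r)) • v j = 0 := by
      rw [← hCsum]
      exact Finset.sum_congr rfl fun j _ => by rw [hCb]
    exact hv4 b hb hfin
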